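/- Let s > 0 be a real number (playing the role of √(−κ) for a curvature bound κ < 0). Let a, b ≥ 0 and c > 0 be real numbers and let t ∈ [−1, 1]. If the hyperbolic law of cosines holds, i.e. cosh(s·a) = cosh(s·b)·cosh(s·c) − sinh(s·b)·sinh(s·c)·t, then a² ≤ (s·c·cosh(s·c)/sinh(s·c))·b² + c² − 2·b·c·t. -/

import Mathlib

open Real Set


lemma aux_sinh_le (x : ℝ) (hx : 0 ≤ x) : Real.sinh x ≤ x * Real.cosh x := by
  have h : MonotoneOn (fun y : ℝ => y * Real.cosh y - Real.sinh y) (Ici 0) := by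
    apply monotoneOn_of_deriv_nonneg (convex_Ici 0)
    · exact ((continuous_id.mul Real.continuous_cosh).sub Real.continuous_sinh).continuousOn
    · intro y hy
      exact (((hasDerivAt_id y).mul (Real.hasDerivAt_cosh y)).sub
        (Real.hasDerivAt_sinh y)).differentiableAt.differentiableWithinAt
    · intro y hy
      rw [interior_Ici, mem_Ioi] at hy
      have hd : HasDerivAt (fun y : ℝ => y * Real.cosh y - Real.sinh y)
          (1 * Real.cosh y + y * Real.sinh y - Real.cosh y) y :=
        ((hasDerivAt_id y).mul (Real.hasDerivAt_cosh y)).sub (Real.hasDerivAt_sinh y)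
      rw [hd.deriv]
      have := Real.sinh_nonneg_iff.2 hy.le
      nlinarith
  have := h (self_mem_Ici) hx hx
  simp at this
  linarith

lemma aux_three_sinh (x : ℝ) (hx : 0 ≤ x) :
    3 * Real.sinh x ≤ x * Real.cosh x + 2 * x := by
  have h1 : MonotoneOn (fun y : ℝ => y * Real.sinh y - 2 * Real.cosh y) (Ici 0) := by
    apply monotoneOn_of_deriv_nonneg (convex_Ici 0)
    · exact ((continuous_id.mul Real.continuous_sinh).sub
        (continuous_const.mul Real.continuous_cosh)).continuousOn
    · intro y hy
      exact (((hasDerivAt_id y).mul (Real.hasDerivAt_sinh y)).sub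
        ((Real.hasDerivAt_cosh y).const_mul 2)).differentiableAt.differentiableWithinAt
    · intro y hy
      rw [interior_Ici, mem_Ioi] at hy
      have hd : HasDerivAt (fun y : ℝ => y * Real.sinh y - 2 * Real.cosh y)
          (1 * Real.sinh y + y * Real.cosh y - 2 * Real.sinh y) y :=
        ((hasDerivAt_id y).mul (Real.hasDerivAt_sinh y)).sub ((Real.hasDerivAt_cosh y).const_mul 2)
      rw [hd.deriv]
      have := aux_sinh_le y hy.le
      linarith
  have h2 : MonotoneOn (fun y : ℝ => y * Real.cosh y + 2 * y - 3 * Real.sinh y) (Ici 0) := by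
    apply monotoneOn_of_deriv_nonneg (convex_Ici 0)
    · exact (((continuous_id.mul Real.continuous_cosh).add
        (continuous_const.mul continuous_id)).sub
        (continuous_const.mul Real.continuous_sinh)).continuousOn
    · intro y hy
      exact ((((hasDerivAt_id y).mul (Real.hasDerivAt_cosh y)).add
        ((hasDerivAt_id y).const_mul 2)).sub
        ((Real.hasDerivAt_sinh y).const_mul 3)).differentiableAt.differentiableWithinAt
    · intro y hy
      rw [interior_Ici, mem_Ioi] at hy
      have hd : HasDerivAt (fun y : ℝ => y * Real.cosh y + 2 * y - 3 * Real.sinh y)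
          (1 * Real.cosh y + y * Real.sinh y + 2 * 1 - 3 * Real.cosh y) y :=
        (((hasDerivAt_id y).mul (Real.hasDerivAt_cosh y)).add
          ((hasDerivAt_id y).const_mul 2)).sub ((Real.hasDerivAt_sinh y).const_mul 3)
      rw [hd.deriv]
      have := h1 (self_mem_Ici) (mem_Ici.2 hy.le) hy.le
      simp at this
      linarith
  have := h2 (self_mem_Ici) hx hx
  simp at this
  linarith

lemma aux_coth_mono {x y : ℝ} (hx : 0 < x) (hxy : x ≤ y) :
    x * Real.cosh x / Real.sinh x ≤ y * Real.cosh y / Real.sinh y := by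
  have h : MonotoneOn (fun z : ℝ => z * Real.cosh z / Real.sinh z) (Ioi 0) := by
    apply monotoneOn_of_deriv_nonneg (convex_Ioi 0)
    · exact ContinuousOn.div (continuous_id.mul Real.continuous_cosh).continuousOn
        Real.continuous_sinh.continuousOn
        (fun z hz => Real.sinh_ne_zero.2 (ne_of_gt hz))
    · intro z hz
      rw [interior_Ioi, mem_Ioi] at hz
      exact (((hasDerivAt_id z).mul (Real.hasDerivAt_cosh z)).div
        (Real.hasDerivAt_sinh z)
        (Real.sinh_ne_zero.2 (ne_of_gt hz))).differentiableAt.differentiableWithinAt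
    · intro z hz
      rw [interior_Ioi, mem_Ioi] at hz
      have hzs : Real.sinh z ≠ 0 := Real.sinh_ne_zero.2 (ne_of_gt hz)
      have hd : HasDerivAt (fun z : ℝ => z * Real.cosh z / Real.sinh z)
          (((1 * Real.cosh z + z * Real.sinh z) * Real.sinh z -
            z * Real.cosh z * Real.cosh z) / Real.sinh z ^ 2) z :=
        ((hasDerivAt_id z).mul (Real.hasDerivAt_cosh z)).div (Real.hasDerivAt_sinh z) hzs
      rw [hd.deriv]
      apply div_nonneg _ (sq_nonneg _)
      have h1 : z ≤ Real.sinh z := Real.self_le_sinh_iff.2 hz.le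
      have h2 : 1 ≤ Real.cosh z := Real.one_le_cosh z
      have h3 : Real.cosh z ^ 2 = Real.sinh z ^ 2 + 1 := Real.cosh_sq z
      nlinarith
  exact h (mem_Ioi.2 hx) (mem_Ioi.2 (lt_of_lt_of_le hx hxy)) hxy

lemma aux_phi_anti {x y : ℝ} (hx : 0 < x) (hxy : x ≤ y) :
    (y * Real.cosh y - Real.sinh y) / Real.sinh y ^ 3 ≤
      (x * Real.cosh x - Real.sinh x) / Real.sinh x ^ 3 := by
  have h : AntitoneOn (fun z : ℝ => (z * Real.cosh z - Real.sinh z) / Real.sinh z ^ 3) (Ioi 0) := by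
    apply antitoneOn_of_deriv_nonpos (convex_Ioi 0)
    · exact ContinuousOn.div
        ((continuous_id.mul Real.continuous_cosh).sub Real.continuous_sinh).continuousOn
        (Real.continuous_sinh.pow 3).continuousOn
        (fun z hz => pow_ne_zero 3 (Real.sinh_ne_zero.2 (ne_of_gt hz)))
    · intro z hz
      rw [interior_Ioi, mem_Ioi] at hz
      exact ((((hasDerivAt_id z).mul (Real.hasDerivAt_cosh z)).sub
        (Real.hasDerivAt_sinh z)).div ((Real.hasDerivAt_sinh z).pow 3)
        (pow_ne_zero 3 (Real.sinh_ne_zero.2 (ne_of_gt hz)))).differentiableAt.differentiableWithinAt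
    · intro z hz
      rw [interior_Ioi, mem_Ioi] at hz
      have hzs : Real.sinh z ≠ 0 := Real.sinh_ne_zero.2 (ne_of_gt hz)
      have hd : HasDerivAt (fun z : ℝ => (z * Real.cosh z - Real.sinh z) / Real.sinh z ^ 3)
          (((1 * Real.cosh z + z * Real.sinh z - Real.cosh z) * Real.sinh z ^ 3 -
            (z * Real.cosh z - Real.sinh z) * (3 * Real.sinh z ^ 2 * Real.cosh z)) /
            (Real.sinh z ^ 3) ^ 2) z := by
        have := (((hasDerivAt_id z).mul (Real.hasDerivAt_cosh z)).sub
          (Real.hasDerivAt_sinh z)).div ((Real.hasDerivAt_sinh z).pow 3)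
          (pow_ne_zero 3 hzs)
        exact this
      rw [hd.deriv]
      apply div_nonpos_of_nonpos_of_nonneg _ (sq_nonneg _)
      -- numerator = sinh z ^2 * (z sinh^2 + 3 sinh cosh - 3 z cosh^2) ≤ 0
      have key : 3 * Real.sinh z * Real.cosh z ≤ 2 * z * Real.cosh z ^ 2 + z := by
        have h2x := aux_three_sinh (2 * z) (by linarith)
        rw [Real.sinh_two_mul, Real.cosh_two_mul] at h2x
        have h3 : Real.cosh z ^ 2 = Real.sinh z ^ 2 + 1 := Real.cosh_sq z
        nlinarith
      have h3 : Real.cosh z ^ 2 = Real.sinh z ^ 2 + 1 := Real.cosh_sq z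
      have h4 : 0 ≤ Real.sinh z := Real.sinh_nonneg_iff.2 hz.le
      have h5 : z * Real.sinh z ^ 2 * Real.cosh z ^ 2 =
          z * Real.sinh z ^ 2 * (Real.sinh z ^ 2 + 1) := by rw [h3]
      nlinarith [mul_nonneg (sq_nonneg (Real.sinh z))
        (by nlinarith : (0:ℝ) ≤ 2 * z * Real.cosh z ^ 2 + z - 3 * Real.sinh z * Real.cosh z), h5]
  exact h (mem_Ioi.2 hx) (mem_Ioi.2 (lt_of_lt_of_le hx hxy)) hxy

lemma aux_E {a c e : ℝ} (ha : 0 < a) (hc : 0 < c) (he : 0 ≤ e)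
    (hea : e ≤ Real.sinh a ^ 2) (hec : e ≤ Real.sinh c ^ 2) :
    e * ((a * Real.cosh a - Real.sinh a) / Real.sinh a ^ 3) ≤
      (c * Real.cosh c - Real.sinh c) / Real.sinh c := by
  have hsa : 0 < Real.sinh a := Real.sinh_pos_iff.2 ha
  have hsc : 0 < Real.sinh c := Real.sinh_pos_iff.2 hc
  have hnum_a : 0 ≤ a * Real.cosh a - Real.sinh a := by linarith [aux_sinh_le a ha.le]
  have hnum_c : 0 ≤ c * Real.cosh c - Real.sinh c := by linarith [aux_sinh_le c hc.le]
  rcases le_total a c with h | h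
  · have key : e * ((a * Real.cosh a - Real.sinh a) / Real.sinh a ^ 3) ≤
        (a * Real.cosh a - Real.sinh a) / Real.sinh a := by
      rw [mul_div_assoc'] at *
      rw [div_le_div_iff₀ (by positivity) hsa]
      nlinarith [mul_le_mul_of_nonneg_right hea hnum_a, sq_nonneg (Real.sinh a)]
    refine key.trans ?_
    have h2 := aux_coth_mono ha h
    rw [sub_div, sub_div, div_self (ne_of_gt hsa), div_self (ne_of_gt hsc)]
    rw [mul_div_assoc] at h2 ⊢
    linarith [aux_coth_mono ha h]
  · have key : e * ((a * Real.cosh a - Real.sinh a) / Real.sinh a ^ 3) ≤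
        Real.sinh c ^ 2 * ((a * Real.cosh a - Real.sinh a) / Real.sinh a ^ 3) :=
      mul_le_mul_of_nonneg_right hec (by positivity)
    refine key.trans ?_
    have h2 := aux_phi_anti hc h
    have h3 : Real.sinh c ^ 2 * ((c * Real.cosh c - Real.sinh c) / Real.sinh c ^ 3) =
        (c * Real.cosh c - Real.sinh c) / Real.sinh c := by
      field_simp
    calc Real.sinh c ^ 2 * ((a * Real.cosh a - Real.sinh a) / Real.sinh a ^ 3)
        ≤ Real.sinh c ^ 2 * ((c * Real.cosh c - Real.sinh c) / Real.sinh c ^ 3) :=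
          mul_le_mul_of_nonneg_left h2 (sq_nonneg _)
      _ = _ := h3



noncomputable def auxC (c t x : ℝ) : ℝ := Real.cosh x * Real.cosh c - Real.sinh x * Real.sinh c * t
noncomputable def auxN (c t x : ℝ) : ℝ := Real.sinh x * Real.cosh c - Real.cosh x * Real.sinh c * t
noncomputable def auxS (c t x : ℝ) : ℝ := Real.sqrt (auxC c t x ^ 2 - 1)
noncomputable def auxA (c t x : ℝ) : ℝ := Real.arsinh (auxS c t x)
noncomputable def auxk (c t x : ℝ) : ℝ :=
  c * Real.cosh c / Real.sinh c * x ^ 2 + c ^ 2 - 2 * c * t * x - auxA c t x ^ 2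
noncomputable def auxk' (c t x : ℝ) : ℝ :=
  2 * (c * Real.cosh c / Real.sinh c) * x - 2 * c * t - 2 * (auxA c t x * auxN c t x / auxS c t x)

section
variable {c t x : ℝ}

lemma auxC_lt (hc : 0 < c) (ht2 : t < 1) {x : ℝ} (hx : 0 ≤ x) : 1 < auxC c t x := by
  rcases eq_or_lt_of_le hx with rfl | hx'
  · simp [auxC]
    exact ne_of_gt hc
  · have h1 : Real.cosh (x - c) = Real.cosh x * Real.cosh c - Real.sinh x * Real.sinh c :=
      Real.cosh_sub x c
    have h2 : 1 ≤ Real.cosh (x - c) := Real.one_le_cosh _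
    have h3 : 0 < Real.sinh x := Real.sinh_pos_iff.2 hx'
    have h4 : 0 < Real.sinh c := Real.sinh_pos_iff.2 hc
    unfold auxC
    nlinarith [mul_pos (mul_pos h3 h4) (by linarith : (0:ℝ) < 1 - t)]

lemma auxS_sq (h : 1 < auxC c t x) : auxS c t x ^ 2 = auxC c t x ^ 2 - 1 :=
  Real.sq_sqrt (by nlinarith)

lemma auxS_pos (h : 1 < auxC c t x) : 0 < auxS c t x :=
  Real.sqrt_pos.2 (by nlinarith)

lemma cosh_auxA (h : 1 < auxC c t x) : Real.cosh (auxA c t x) = auxC c t x := by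
  rw [auxA, Real.cosh_arsinh, auxS_sq h, show 1 + (auxC c t x ^ 2 - 1) = auxC c t x ^ 2 by ring,
    Real.sqrt_sq (by linarith)]

lemma sinh_auxA : Real.sinh (auxA c t x) = auxS c t x := Real.sinh_arsinh _

lemma auxA_pos (h : 1 < auxC c t x) : 0 < auxA c t x :=
  Real.arsinh_pos_iff.2 (auxS_pos h)

lemma hasDerivAt_auxC (x : ℝ) : HasDerivAt (auxC c t) (auxN c t x) x := by
  have h := ((Real.hasDerivAt_cosh x).mul_const (Real.cosh c)).sub
    (((Real.hasDerivAt_sinh x).mul_const (Real.sinh c)).mul_const t)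
  exact h

lemma hasDerivAt_auxN (x : ℝ) : HasDerivAt (auxN c t) (auxC c t x) x := by
  have h := ((Real.hasDerivAt_sinh x).mul_const (Real.cosh c)).sub
    (((Real.hasDerivAt_cosh x).mul_const (Real.sinh c)).mul_const t)
  exact h

lemma hasDerivAt_auxS (h : 1 < auxC c t x) :
    HasDerivAt (auxS c t) (auxC c t x * auxN c t x / auxS c t x) x := by
  have hq : HasDerivAt (fun y => auxC c t y ^ 2 - 1) (2 * auxC c t x * auxN c t x) x := by
    have := ((hasDerivAt_auxC (c := c) (t := t) x).pow 2).sub_const 1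
    simpa using this
  have h0 : auxC c t x ^ 2 - 1 ≠ 0 := by nlinarith
  have := hq.sqrt h0
  have heq : 2 * auxC c t x * auxN c t x / (2 * Real.sqrt (auxC c t x ^ 2 - 1)) =
      auxC c t x * auxN c t x / auxS c t x := by
    rw [auxS, mul_assoc, mul_div_mul_left _ _ (two_ne_zero)]
  rw [heq] at this
  exact this

lemma hasDerivAt_auxA (h : 1 < auxC c t x) :
    HasDerivAt (auxA c t) (auxN c t x / auxS c t x) x := by
  have hd := (hasDerivAt_auxS h).arsinh
  have hC0 : auxC c t x ≠ 0 := by linarith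
  have hS0 : auxS c t x ≠ 0 := ne_of_gt (auxS_pos h)
  have h1 : Real.sqrt (1 + auxS c t x ^ 2) = auxC c t x := by
    rw [auxS_sq h, show 1 + (auxC c t x ^ 2 - 1) = auxC c t x ^ 2 by ring,
      Real.sqrt_sq (by linarith)]
  rw [h1] at hd
  have : (auxC c t x)⁻¹ • (auxC c t x * auxN c t x / auxS c t x) = auxN c t x / auxS c t x := by
    rw [smul_eq_mul]
    field_simp
  rw [this] at hd
  exact hd

lemma auxS_sub_auxN (h : 1 < auxC c t x) :
    auxS c t x ^ 2 - auxN c t x ^ 2 = (1 - t ^ 2) * Real.sinh c ^ 2 := by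
  rw [auxS_sq h]
  have e1 : Real.cosh x ^ 2 = Real.sinh x ^ 2 + 1 := Real.cosh_sq x
  have e2 : Real.cosh c ^ 2 = Real.sinh c ^ 2 + 1 := Real.cosh_sq c
  unfold auxC auxN
  linear_combination (Real.cosh c ^ 2 - t ^ 2 * Real.sinh c ^ 2) * e1 + e2


lemma continuous_auxC : Continuous (auxC c t) :=
  (Real.continuous_cosh.mul continuous_const).sub
    ((Real.continuous_sinh.mul continuous_const).mul continuous_const)

lemma continuous_auxN : Continuous (auxN c t) :=
  (Real.continuous_sinh.mul continuous_const).sub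
    ((Real.continuous_cosh.mul continuous_const).mul continuous_const)

lemma continuous_auxS : Continuous (auxS c t) :=
  ((continuous_auxC.pow 2).sub continuous_const).sqrt

lemma continuous_auxA : Continuous (auxA c t) :=
  Real.continuous_arsinh.comp continuous_auxS

lemma hasDerivAt_auxk (h : 1 < auxC c t x) :
    HasDerivAt (auxk c t) (auxk' c t x) x := by
  have h1 : HasDerivAt (fun y : ℝ => c * Real.cosh c / Real.sinh c * y ^ 2)
      (c * Real.cosh c / Real.sinh c * (2 * x)) x := by
    simpa [mul_comm, mul_assoc] using (hasDerivAt_pow 2 x).const_mul (c * Real.cosh c / Real.sinh c)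
  have h2 : HasDerivAt (fun y : ℝ => 2 * c * t * y) (2 * c * t) x := by
    simpa using (hasDerivAt_id x).const_mul (2 * c * t)
  have h3 : HasDerivAt (fun y : ℝ => auxA c t y ^ 2)
      (2 * auxA c t x * (auxN c t x / auxS c t x)) x := by
    simpa [mul_comm, mul_assoc] using (hasDerivAt_auxA h).fun_pow 2
  have H := ((h1.add_const (c ^ 2)).sub h2).sub h3
  have heq : auxk' c t x = c * Real.cosh c / Real.sinh c * (2 * x) - 2 * c * t -
      2 * auxA c t x * (auxN c t x / auxS c t x) := by
    unfold auxk'; ring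
  rw [heq]
  exact H

lemma hasDerivAt_auxk' (h : 1 < auxC c t x) :
    HasDerivAt (auxk' c t)
      (2 * (c * Real.cosh c / Real.sinh c) -
        2 * (((auxN c t x / auxS c t x * auxN c t x + auxA c t x * auxC c t x) * auxS c t x -
          auxA c t x * auxN c t x * (auxC c t x * auxN c t x / auxS c t x)) / auxS c t x ^ 2)) x := by
  have hS0 : auxS c t x ≠ 0 := ne_of_gt (auxS_pos h)
  have hprod : HasDerivAt (fun y => auxA c t y * auxN c t y / auxS c t y)
      (((auxN c t x / auxS c t x * auxN c t x + auxA c t x * auxC c t x) * auxS c t x -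
        auxA c t x * auxN c t x * (auxC c t x * auxN c t x / auxS c t x)) / auxS c t x ^ 2) x :=
    ((hasDerivAt_auxA h).mul (hasDerivAt_auxN (c := c) (t := t) x)).div (hasDerivAt_auxS h) hS0
  have h1 : HasDerivAt (fun y : ℝ => 2 * (c * Real.cosh c / Real.sinh c) * y)
      (2 * (c * Real.cosh c / Real.sinh c)) x := by
    simpa using (hasDerivAt_id x).const_mul (2 * (c * Real.cosh c / Real.sinh c))
  exact (h1.sub_const (2 * c * t)).sub (hprod.const_mul 2)

lemma auxk''_nonneg (hc : 0 < c) (ht1 : -1 ≤ t) (ht2 : t < 1) (hx : 0 ≤ x) :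
    0 ≤ 2 * (c * Real.cosh c / Real.sinh c) -
        2 * (((auxN c t x / auxS c t x * auxN c t x + auxA c t x * auxC c t x) * auxS c t x -
          auxA c t x * auxN c t x * (auxC c t x * auxN c t x / auxS c t x)) / auxS c t x ^ 2) := by
  have h := auxC_lt hc ht2 hx
  have hSpos := auxS_pos h
  have hS0 : auxS c t x ≠ 0 := ne_of_gt hSpos
  have hsc : 0 < Real.sinh c := Real.sinh_pos_iff.2 hc
  have hid := auxS_sub_auxN h
  have hApos := auxA_pos h
  have ht2' : (0:ℝ) ≤ 1 - t ^ 2 := by nlinarith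
  have he : (0:ℝ) ≤ (1 - t ^ 2) * Real.sinh c ^ 2 := mul_nonneg ht2' (sq_nonneg _)
  have hea : (1 - t ^ 2) * Real.sinh c ^ 2 ≤ Real.sinh (auxA c t x) ^ 2 := by
    rw [sinh_auxA]
    nlinarith [sq_nonneg (auxN c t x)]
  have hec : (1 - t ^ 2) * Real.sinh c ^ 2 ≤ Real.sinh c ^ 2 := by
    nlinarith [sq_nonneg (Real.sinh c), sq_nonneg (t * Real.sinh c)]
  have hE := aux_E hApos hc he hea hec
  rw [sinh_auxA, cosh_auxA h] at hE
  -- hE : (1-t^2)*sinh c^2 * ((A*C - S)/S^3) ≤ (c cosh c - sinh c)/sinh c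
  have hKeq : c * Real.cosh c / Real.sinh c =
      1 + (c * Real.cosh c - Real.sinh c) / Real.sinh c := by
    field_simp
    ring
  have hDeq : ((auxN c t x / auxS c t x * auxN c t x + auxA c t x * auxC c t x) * auxS c t x -
        auxA c t x * auxN c t x * (auxC c t x * auxN c t x / auxS c t x)) / auxS c t x ^ 2
      = 1 + (1 - t ^ 2) * Real.sinh c ^ 2 *
          ((auxA c t x * auxC c t x - auxS c t x) / auxS c t x ^ 3) := by
    have hN2 : auxN c t x ^ 2 = auxS c t x ^ 2 - (1 - t ^ 2) * Real.sinh c ^ 2 := by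
      linarith [hid]
    have step1 : ((auxN c t x / auxS c t x * auxN c t x + auxA c t x * auxC c t x) * auxS c t x -
          auxA c t x * auxN c t x * (auxC c t x * auxN c t x / auxS c t x)) / auxS c t x ^ 2
        = (auxN c t x ^ 2 * auxS c t x + auxA c t x * auxC c t x * auxS c t x ^ 2 -
            auxA c t x * auxC c t x * auxN c t x ^ 2) / auxS c t x ^ 3 := by
      field_simp
    rw [step1, hN2]
    field_simp
    ring
  rw [hDeq, hKeq]
  linarith [hE]

lemma auxk'_mono (hc : 0 < c) (ht1 : -1 ≤ t) (ht2 : t < 1) :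
    MonotoneOn (auxk' c t) (Ici 0) := by
  apply monotoneOn_of_deriv_nonneg (convex_Ici 0)
  · apply ContinuousOn.sub
    · exact ((continuous_const.mul continuous_id).sub continuous_const).continuousOn
    · apply ContinuousOn.mul continuousOn_const
      exact ContinuousOn.div (continuous_auxA.mul continuous_auxN).continuousOn
        continuous_auxS.continuousOn
        (fun y hy => ne_of_gt (auxS_pos (auxC_lt hc ht2 hy)))
  · intro y hy
    rw [interior_Ici, mem_Ioi] at hy
    exact (hasDerivAt_auxk' (auxC_lt hc ht2 hy.le)).differentiableAt.differentiableWithinAt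
  · intro y hy
    rw [interior_Ici, mem_Ioi] at hy
    rw [(hasDerivAt_auxk' (auxC_lt hc ht2 hy.le)).deriv]
    exact auxk''_nonneg hc ht1 ht2 hy.le

lemma auxA_zero (hc : 0 < c) : auxA c t 0 = c := by
  have hC0 : auxC c t 0 = Real.cosh c := by simp [auxC]
  have hS0 : auxS c t 0 = Real.sinh c := by
    rw [auxS, hC0, Real.cosh_sq,
      show Real.sinh c ^ 2 + 1 - 1 = Real.sinh c ^ 2 by ring,
      Real.sqrt_sq (Real.sinh_nonneg_iff.2 hc.le)]
  rw [auxA, hS0, Real.arsinh_sinh]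

lemma auxk'_nonneg (hc : 0 < c) (ht1 : -1 ≤ t) (ht2 : t < 1) (hx : 0 ≤ x) :
    0 ≤ auxk' c t x := by
  have hsc : 0 < Real.sinh c := Real.sinh_pos_iff.2 hc
  have hS0 : auxS c t 0 = Real.sinh c := by
    rw [auxS, show auxC c t 0 = Real.cosh c by simp [auxC], Real.cosh_sq,
      show Real.sinh c ^ 2 + 1 - 1 = Real.sinh c ^ 2 by ring,
      Real.sqrt_sq (Real.sinh_nonneg_iff.2 hc.le)]
  have hN0 : auxN c t 0 = -(Real.sinh c * t) := by simp [auxN]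
  have h0 : auxk' c t 0 = 0 := by
    rw [auxk', auxA_zero hc, hN0, hS0]
    field_simp
    ring
  have := auxk'_mono hc ht1 ht2 self_mem_Ici (mem_Ici.2 hx) hx
  rw [h0] at this
  exact this

lemma auxk_nonneg (hc : 0 < c) (ht1 : -1 ≤ t) (ht2 : t < 1) (hx : 0 ≤ x) :
    0 ≤ auxk c t x := by
  have hmono : MonotoneOn (auxk c t) (Ici 0) := by
    apply monotoneOn_of_deriv_nonneg (convex_Ici 0)
    · apply ContinuousOn.sub
      · exact (((continuous_const.mul (continuous_id.pow 2)).add continuous_const).sub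
          (continuous_const.mul continuous_id)).continuousOn
      · exact (continuous_auxA.pow 2).continuousOn
    · intro y hy
      rw [interior_Ici, mem_Ioi] at hy
      exact (hasDerivAt_auxk (auxC_lt hc ht2 hy.le)).differentiableAt.differentiableWithinAt
    · intro y hy
      rw [interior_Ici, mem_Ioi] at hy
      rw [(hasDerivAt_auxk (auxC_lt hc ht2 hy.le)).deriv]
      exact auxk'_nonneg hc ht1 ht2 hy.le
  have h0 : auxk c t 0 = 0 := by
    rw [auxk, auxA_zero hc]
    ring
  have := hmono self_mem_Ici (mem_Ici.2 hx) hx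
  rw [h0] at this
  exact this

end

lemma main_one (a b c t : ℝ) (ha : 0 ≤ a) (hb : 0 ≤ b) (hc : 0 < c)
    (ht1 : -1 ≤ t) (ht2 : t ≤ 1)
    (hlaw : Real.cosh a = Real.cosh b * Real.cosh c - Real.sinh b * Real.sinh c * t) :
    a ^ 2 ≤ c * Real.cosh c / Real.sinh c * b ^ 2 + c ^ 2 - 2 * b * c * t := by
  have hsc : 0 < Real.sinh c := Real.sinh_pos_iff.2 hc
  have hK : 1 ≤ c * Real.cosh c / Real.sinh c := by
    rw [le_div_iff₀ hsc]
    simpa using aux_sinh_le c hc.le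
  rcases eq_or_lt_of_le ht2 with rfl | htl
  · -- t = 1
    have h1 : Real.cosh a = Real.cosh (b - c) := by
      rw [Real.cosh_sub]; linarith [hlaw]
    have h2 : |a| = |b - c| := by
      have u1 := Real.cosh_le_cosh.1 h1.le
      have u2 := Real.cosh_le_cosh.1 h1.ge
      linarith
    have h3 : a ^ 2 = (b - c) ^ 2 := by
      rw [← sq_abs a, ← sq_abs (b - c), h2]
    rw [h3]
    nlinarith [sq_nonneg b]
  · -- t < 1
    have hCb : auxC c t b = Real.cosh a := by rw [auxC, hlaw]
    have hSb : auxS c t b = Real.sinh a := by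
      rw [auxS, hCb, Real.cosh_sq,
        show Real.sinh a ^ 2 + 1 - 1 = Real.sinh a ^ 2 by ring,
        Real.sqrt_sq (Real.sinh_nonneg_iff.2 ha)]
    have hAb : auxA c t b = a := by rw [auxA, hSb, Real.arsinh_sinh]
    have hk := auxk_nonneg (x := b) hc ht1 htl hb
    rw [auxk, hAb] at hk
    linarith


/-- Analytic core of the trigonometric comparison inequality for curvature
lower bound `κ = -s² < 0`: if the sides `a`, `b`, `c` and `t = cos A` satisfy
the hyperbolic law of cosines, then the squared-distance comparison holds with
distortion factor `s·c·coth(s·c)`. -/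
theorem hyperbolic_law_of_cosines_comparison
    (s a b c t : ℝ) (hs : 0 < s) (ha : 0 ≤ a) (hb : 0 ≤ b) (hc : 0 < c)
    (ht : t ∈ Set.Icc (-1 : ℝ) 1)
    (hlaw : Real.cosh (s * a) =
      Real.cosh (s * b) * Real.cosh (s * c) - Real.sinh (s * b) * Real.sinh (s * c) * t) :
    a ^ 2 ≤ (s * c * Real.cosh (s * c) / Real.sinh (s * c)) * b ^ 2 + c ^ 2 - 2 * b * c * t := by
  obtain ⟨ht1, ht2⟩ := ht
  have key := main_one (s * a) (s * b) (s * c) t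
    (by positivity) (by positivity) (by positivity) ht1 ht2 hlaw
  have hs2 : (0:ℝ) < s ^ 2 := by positivity
  rw [← mul_le_mul_iff_right₀ hs2]
  calc s ^ 2 * a ^ 2 = (s * a) ^ 2 := by ring
    _ ≤ s * c * Real.cosh (s * c) / Real.sinh (s * c) * (s * b) ^ 2 + (s * c) ^ 2 -
        2 * (s * b) * (s * c) * t := key
    _ = s ^ 2 * (s * c * Real.cosh (s * c) / Real.sinh (s * c) * b ^ 2 + c ^ 2 -
        2 * b * c * t) := by ring
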